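/- Let q be a real number with 0 < q < 1, and let (β_k)_{k≥0} be the (unique) sequence of real numbers with β_0 = 1 and, for every k ≥ 1, q·∑_{l=0}^k C(k,l) q^l β_l − β_k = 1 if k = 1 and = 0 if k > 1. Define the Carlitz q-Bernoulli polynomials β_k(x) = ∑_{i=0}^k C(k,i) q^{ix} β_i [x]_q^{k−i}. Then for every positive integer n and every integer k ≥ 0: q^n β_k(n) − β_k = (q−1)·∑_{l=0}^{n−1} q^l [l]_q^k + k·∑_{l=0}^{n−1} q^{2l} [l]_q^{k−1} (with the conventions [0]_q^0 = 1 and that the second sum is 0 when k = 0). -/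

import Mathlib

open Finset

namespace CarlitzAux

noncomputable def g (q : ℝ) (j : ℕ) : ℝ := ((j : ℝ) + 1) * (1 - q) / (1 - q ^ (j + 1))

noncomputable def b (q : ℝ) (m : ℕ) : ℝ :=
  (1 - q)⁻¹ ^ m * ∑ j ∈ range (m + 1), (m.choose j : ℝ) * (-1) ^ j * g q j

lemma one_sub_pow_ne {q : ℝ} (hq0 : 0 < q) (hq1 : q < 1) (s : ℕ) : 1 - q ^ (s + 1) ≠ 0 := by
  have : q ^ (s + 1) < 1 := pow_lt_one₀ hq0.le hq1 (Nat.succ_ne_zero s)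
  linarith

lemma neg_one_pow_sub {i n : ℕ} (h : i ≤ n) : ((-1 : ℝ)) ^ (n - i) = (-1) ^ n * (-1) ^ i := by
  conv_rhs => rw [← Nat.sub_add_cancel h, pow_add, mul_assoc, ← mul_pow]
  norm_num

/-- triangle reindex -/
lemma triangle (n : ℕ) (F : ℕ → ℕ → ℝ) :
    ∑ l ∈ range n, ∑ j ∈ range (l + 1), F l j
      = ∑ j ∈ range n, ∑ m ∈ range (n - j), F (j + m) j := by
  rw [← Finset.sum_range_diag_flip n (fun a b => F (a + b) a)]
  refine sum_congr rfl fun l _ => sum_congr rfl fun j hj => ?_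
  rw [Nat.add_sub_cancel' (Nat.lt_succ_iff.mp (mem_range.mp hj))]

/-- binomial collapse -/
lemma collapse (x : ℝ) {k j : ℕ} (hjk : j ≤ k) :
    ∑ m ∈ range (k + 1 - j), (k.choose (j + m) : ℝ) * ((j + m).choose j : ℝ) * x ^ m
      = (k.choose j : ℝ) * (1 + x) ^ (k - j) := by
  have h1 : k + 1 - j = (k - j) + 1 := by omega
  rw [h1, add_comm (1 : ℝ) x, add_pow]
  rw [mul_sum]
  refine sum_congr rfl fun m hm => ?_
  have hm' : m ≤ k - j := Nat.lt_succ_iff.mp (mem_range.mp hm)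
  have h2 : (k.choose (j + m)) * ((j + m).choose j) = (k.choose j) * ((k - j).choose m) := by
    have := Nat.choose_mul (n := k) (k := j + m) (s := j) (by omega)
    simpa [Nat.add_sub_cancel_left] using this
  have h2' : (k.choose (j + m) : ℝ) * ((j + m).choose j : ℝ) = (k.choose j : ℝ) * ((k - j).choose m : ℝ) := by
    exact_mod_cast congrArg (Nat.cast : ℕ → ℝ) h2
  rw [h2']
  simp [one_pow]
  ring

lemma sum_choose_neg_one {k : ℕ} (hk : 1 ≤ k) :
    ∑ j ∈ range (k + 1), (k.choose j : ℝ) * (-1) ^ j = 0 := by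
  have h := Int.alternating_sum_range_choose_of_ne (n := k) (by omega)
  have : ((∑ m ∈ range (k + 1), (-1 : ℤ) ^ m * (k.choose m : ℤ) : ℤ) : ℝ) = 0 := by
    rw [h]; norm_num
  rw [← this]
  push_cast
  refine sum_congr rfl fun j _ => by ring

lemma lemD {k : ℕ} (hk : 1 ≤ k) :
    ∑ j ∈ range (k + 1), (k.choose j : ℝ) * (-1) ^ j * ((j : ℝ) + 1)
      = if k = 1 then -1 else 0 := by
  have split : ∀ j ∈ range (k + 1), (k.choose j : ℝ) * (-1) ^ j * ((j : ℝ) + 1)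
      = (k.choose j : ℝ) * (-1) ^ j * (j : ℝ) + (k.choose j : ℝ) * (-1) ^ j := by
    intro j _; ring
  rw [sum_congr rfl split, sum_add_distrib, sum_choose_neg_one hk, add_zero]
  -- now the weighted sum
  obtain ⟨k', rfl⟩ : ∃ k', k = k' + 1 := ⟨k - 1, by omega⟩
  rw [sum_range_succ']
  simp only [Nat.cast_zero, mul_zero, add_zero]
  have step : ∀ j ∈ range (k' + 1),
      ((k' + 1).choose (j + 1) : ℝ) * (-1) ^ (j + 1) * ((j + 1 : ℕ) : ℝ)
        = -((k' + 1) : ℝ) * ((k'.choose j : ℝ) * (-1) ^ j) := by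
    intro j _
    have h := Nat.add_one_mul_choose_eq k' j
    have h' : ((k' + 1 : ℕ) : ℝ) * (k'.choose j : ℝ) = ((k' + 1).choose (j + 1) : ℝ) * ((j + 1 : ℕ) : ℝ) := by
      exact_mod_cast congrArg (Nat.cast : ℕ → ℝ) h
    push_cast at h' ⊢
    rw [pow_succ]
    linear_combination ((-1 : ℝ) ^ j) * h'
  rw [sum_congr rfl step, ← mul_sum]
  have halt : ∑ j ∈ range (k' + 1), (k'.choose j : ℝ) * (-1) ^ j
      = if k' = 0 then 1 else 0 := by
    have h := Int.alternating_sum_range_choose (n := k')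
    have : ((∑ m ∈ range (k' + 1), (-1 : ℤ) ^ m * (k'.choose m : ℤ) : ℤ) : ℝ)
        = if k' = 0 then 1 else 0 := by rw [h]; split <;> norm_num
    rw [← this]; push_cast; refine sum_congr rfl fun j _ => by ring
  rw [halt]
  rcases Nat.eq_zero_or_pos k' with h | h
  · subst h; norm_num
  · have : ¬ (k' = 0) := by omega
    have : k' + 1 ≠ 1 := by omega
    simp [*]

lemma b_rec {q : ℝ} (hq0 : 0 < q) (hq1 : q < 1) {k : ℕ} (hk : 1 ≤ k) :
    q * (∑ l ∈ range (k + 1), (k.choose l : ℝ) * q ^ l * b q l) - b q k =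
      if k = 1 then 1 else 0 := by
  have h1q : (1 : ℝ) - q ≠ 0 := by linarith
  have hcq : 1 + q * (1 - q)⁻¹ = (1 - q)⁻¹ := by field_simp; ring
  have e1 : ∀ l ∈ range (k + 1), (k.choose l : ℝ) * q ^ l * b q l
      = ∑ j ∈ range (l + 1),
          (k.choose l : ℝ) * (q * (1 - q)⁻¹) ^ l * ((l.choose j : ℝ) * (-1) ^ j * g q j) := by
    intro l _
    have hb : b q l = ∑ j ∈ range (l + 1), (1 - q)⁻¹ ^ l * ((l.choose j : ℝ) * (-1) ^ j * g q j) := by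
      rw [b, mul_sum]
    rw [hb, mul_sum]
    exact sum_congr rfl fun j _ => by rw [mul_pow]; ring
  rw [sum_congr rfl e1,
    triangle (k + 1) (fun l j => (k.choose l : ℝ) * (q * (1 - q)⁻¹) ^ l
      * ((l.choose j : ℝ) * (-1) ^ j * g q j))]
  have e2 : ∀ j ∈ range (k + 1),
      ∑ m ∈ range (k + 1 - j), (k.choose (j + m) : ℝ) * (q * (1 - q)⁻¹) ^ (j + m)
          * (((j + m).choose j : ℝ) * (-1) ^ j * g q j)
        = (k.choose j : ℝ) * (-1) ^ j * g q j * (q ^ j * (1 - q)⁻¹ ^ k) := by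
    intro j hj
    have hjk : j ≤ k := Nat.lt_succ_iff.mp (mem_range.mp hj)
    have estep : ∀ m ∈ range (k + 1 - j),
        (k.choose (j + m) : ℝ) * (q * (1 - q)⁻¹) ^ (j + m)
            * (((j + m).choose j : ℝ) * (-1) ^ j * g q j)
          = ((-1) ^ j * g q j * (q * (1 - q)⁻¹) ^ j)
            * ((k.choose (j + m) : ℝ) * ((j + m).choose j : ℝ) * (q * (1 - q)⁻¹) ^ m) := by
      intro m _; rw [pow_add]; ring
    rw [sum_congr rfl estep, ← mul_sum, collapse (q * (1 - q)⁻¹) hjk, hcq]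
    have hck : (1 - q)⁻¹ ^ j * (1 - q)⁻¹ ^ (k - j) = (1 - q)⁻¹ ^ k := by
      rw [← pow_add]; congr 1; omega
    rw [mul_pow, ← hck]; ring
  rw [sum_congr rfl e2]
  have e3 : ∀ j ∈ range (k + 1),
      q * ((k.choose j : ℝ) * (-1) ^ j * g q j * (q ^ j * (1 - q)⁻¹ ^ k))
        = (1 - q)⁻¹ ^ k * ((k.choose j : ℝ) * (-1) ^ j * g q j)
          - (1 - q)⁻¹ ^ k * (1 - q) * ((k.choose j : ℝ) * (-1) ^ j * ((j : ℝ) + 1)) := by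
    intro j _
    have hne := one_sub_pow_ne hq0 hq1 j
    rw [g]
    field_simp
    ring
  rw [mul_sum, sum_congr rfl e3, sum_sub_distrib, ← mul_sum, ← mul_sum, ← b, lemD hk]
  rcases eq_or_ne k 1 with h | h
  · subst h; simp; field_simp
  · simp [h]

lemma beta_eq_b {q : ℝ} (hq0 : 0 < q) (hq1 : q < 1) (β : ℕ → ℝ) (h0 : β 0 = 1)
    (hrec : ∀ k : ℕ, 1 ≤ k →
      q * (∑ l ∈ Finset.range (k + 1), (k.choose l : ℝ) * q ^ l * β l) - β k =
        if k = 1 then 1 else 0) :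
    ∀ m, β m = b q m := by
  have h1q : (1 : ℝ) - q ≠ 0 := by linarith
  intro m
  induction m using Nat.strong_induction_on with
  | _ m ih =>
    rcases Nat.eq_zero_or_pos m with rfl | hm
    · have hb0 : b q 0 = 1 := by
        simp [b, g]
        field_simp
        exact h1q
      rw [h0, hb0]
    · have e1 := hrec m hm
      have e2 := b_rec hq0 hq1 hm
      rw [sum_range_succ] at e1 e2
      have hS : ∑ l ∈ range m, (m.choose l : ℝ) * q ^ l * β l
          = ∑ l ∈ range m, (m.choose l : ℝ) * q ^ l * b q l := by
        exact sum_congr rfl fun l hl => by rw [ih l (mem_range.mp hl)]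
      rw [hS] at e1
      have key : (q * q ^ m - 1) * (β m - b q m) = 0 := by
        simp only [Nat.choose_self, Nat.cast_one, one_mul] at e1 e2
        linear_combination e1 - e2
      have hne : q * q ^ m - 1 ≠ 0 := by
        have : q * q ^ m < 1 := by
          have := pow_lt_one₀ hq0.le hq1 (Nat.succ_ne_zero m)
          rw [pow_succ] at this; linarith [this]
        linarith
      have := mul_eq_zero.mp key
      rcases this with h | h
      · exact absurd h hne
      · linarith

lemma T_eq {q : ℝ} (hq0 : 0 < q) (hq1 : q < 1) (β : ℕ → ℝ) (h0 : β 0 = 1)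
    (hrec : ∀ k : ℕ, 1 ≤ k →
      q * (∑ l ∈ Finset.range (k + 1), (k.choose l : ℝ) * q ^ l * β l) - β k =
        if k = 1 then 1 else 0) (n : ℕ) :
    ∑ i ∈ range (n + 1), (n.choose i : ℝ) * (-1) ^ (n - i) * (1 - q)⁻¹ ^ (n - i) * β i
      = (-1) ^ n * (1 - q)⁻¹ ^ n * g q n := by
  have e1 : ∀ i ∈ range (n + 1),
      (n.choose i : ℝ) * (-1) ^ (n - i) * (1 - q)⁻¹ ^ (n - i) * β i
        = ∑ j ∈ range (i + 1), ((-1) ^ n * (1 - q)⁻¹ ^ n) *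
            ((n.choose i : ℝ) * (-1) ^ i * ((i.choose j : ℝ) * (-1) ^ j * g q j)) := by
    intro i hi
    have hin : i ≤ n := Nat.lt_succ_iff.mp (mem_range.mp hi)
    have hb : b q i = ∑ j ∈ range (i + 1), (1 - q)⁻¹ ^ i * ((i.choose j : ℝ) * (-1) ^ j * g q j) := by
      rw [b, mul_sum]
    rw [beta_eq_b hq0 hq1 β h0 hrec i, hb, neg_one_pow_sub hin, mul_sum]
    refine sum_congr rfl fun j _ => ?_
    have hpp : (1 - q)⁻¹ ^ (n - i) * (1 - q)⁻¹ ^ i = (1 - q)⁻¹ ^ n := by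
      rw [← pow_add]; congr 1; omega
    rw [← hpp]; ring
  rw [sum_congr rfl e1,
    triangle (n + 1) (fun i j => ((-1) ^ n * (1 - q)⁻¹ ^ n) *
      ((n.choose i : ℝ) * (-1) ^ i * ((i.choose j : ℝ) * (-1) ^ j * g q j)))]
  have e2 : ∀ j ∈ range (n + 1),
      ∑ m ∈ range (n + 1 - j), ((-1) ^ n * (1 - q)⁻¹ ^ n) *
          ((n.choose (j + m) : ℝ) * (-1) ^ (j + m) * (((j + m).choose j : ℝ) * (-1) ^ j * g q j))
        = ((-1) ^ n * (1 - q)⁻¹ ^ n) * (g q j * ((n.choose j : ℝ) * (0 : ℝ) ^ (n - j))) := by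
    intro j hj
    have hjn : j ≤ n := Nat.lt_succ_iff.mp (mem_range.mp hj)
    have estep : ∀ m ∈ range (n + 1 - j), ((-1) ^ n * (1 - q)⁻¹ ^ n) *
          ((n.choose (j + m) : ℝ) * (-1) ^ (j + m) * (((j + m).choose j : ℝ) * (-1) ^ j * g q j))
        = (((-1) ^ n * (1 - q)⁻¹ ^ n) * (g q j * ((-1 : ℝ) ^ j * (-1 : ℝ) ^ j))) *
            ((n.choose (j + m) : ℝ) * ((j + m).choose j : ℝ) * (-1 : ℝ) ^ m) := by
      intro m _; rw [pow_add]; ring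
    rw [sum_congr rfl estep, ← mul_sum, collapse (-1 : ℝ) hjn]
    have hsq : ((-1 : ℝ)) ^ j * (-1) ^ j = 1 := by rw [← mul_pow]; norm_num
    rw [show ((1 : ℝ) + -1) = 0 from by norm_num, hsq]
    ring
  rw [sum_congr rfl e2, ← mul_sum]
  have e3 : ∑ j ∈ range (n + 1), g q j * ((n.choose j : ℝ) * (0 : ℝ) ^ (n - j)) = g q n := by
    rw [Finset.sum_eq_single_of_mem n (self_mem_range_succ n)]
    · simp
    · intro j hj hne
      have hz : n - j ≠ 0 := by
        have := Nat.lt_succ_iff.mp (mem_range.mp hj); omega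
      rw [zero_pow hz]; ring
  rw [e3]

lemma lemP {q : ℝ} (hq0 : 0 < q) (hq1 : q < 1) (β : ℕ → ℝ) (h0 : β 0 = 1)
    (hrec : ∀ k : ℕ, 1 ≤ k →
      q * (∑ l ∈ Finset.range (k + 1), (k.choose l : ℝ) * q ^ l * β l) - β k =
        if k = 1 then 1 else 0) (k : ℕ) (y : ℝ) :
    ∑ i ∈ range (k + 1), (k.choose i : ℝ) * y ^ i * β i * ((1 - y) / (1 - q)) ^ (k - i)
      = (1 - q) * (1 - q)⁻¹ ^ k *
          ∑ s ∈ range (k + 1), (k.choose s : ℝ) * (-y) ^ s * (((s : ℝ) + 1) / (1 - q ^ (s + 1))) := by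
  have h1q : (1 : ℝ) - q ≠ 0 := by linarith
  set f : ℕ → ℕ → ℝ := fun i m =>
    (k.choose i : ℝ) * ((k - i).choose m : ℝ) * β i * y ^ i * (-y) ^ m * (1 - q)⁻¹ ^ (k - i)
    with hf
  have e1 : ∀ i ∈ range (k + 1),
      (k.choose i : ℝ) * y ^ i * β i * ((1 - y) / (1 - q)) ^ (k - i)
        = ∑ m ∈ range (k + 1 - i), f i m := by
    intro i hi
    have hik : i ≤ k := Nat.lt_succ_iff.mp (mem_range.mp hi)
    have hr : k + 1 - i = (k - i) + 1 := by omega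
    have hbin : ((1 : ℝ) - y) ^ (k - i)
        = ∑ m ∈ range ((k - i) + 1), (-y) ^ m * ((k - i).choose m : ℝ) := by
      rw [show (1 : ℝ) - y = -y + 1 from by ring, add_pow]
      exact sum_congr rfl fun m _ => by rw [one_pow, mul_one]
    rw [hr, div_pow, div_eq_mul_inv, ← inv_pow, hbin, sum_mul, mul_sum]
    exact sum_congr rfl fun m _ => by rw [hf]; ring
  rw [sum_congr rfl e1, ← Finset.sum_range_diag_flip (k + 1) f]
  rw [mul_sum]
  refine sum_congr rfl fun s hs => ?_
  have hsk : s ≤ k := Nat.lt_succ_iff.mp (mem_range.mp hs)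
  have e2 : ∀ i ∈ range (s + 1), f i (s - i)
      = ((k.choose s : ℝ) * y ^ s * (1 - q)⁻¹ ^ (k - s)) *
          ((s.choose i : ℝ) * (-1) ^ (s - i) * (1 - q)⁻¹ ^ (s - i) * β i) := by
    intro i hi
    have his : i ≤ s := Nat.lt_succ_iff.mp (mem_range.mp hi)
    have hcc : (k.choose i : ℝ) * ((k - i).choose (s - i) : ℝ)
        = (k.choose s : ℝ) * (s.choose i : ℝ) := by
      exact_mod_cast congrArg (Nat.cast : ℕ → ℝ) (Nat.choose_mul (n := k) his).symm
    have hy : y ^ i * (-y) ^ (s - i) = (-1) ^ (s - i) * y ^ s := by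
      calc y ^ i * (-y) ^ (s - i) = (-1) ^ (s - i) * (y ^ i * y ^ (s - i)) := by
            rw [neg_pow]; ring
        _ = (-1) ^ (s - i) * y ^ s := by rw [← pow_add, Nat.add_sub_cancel' his]
    have hcp : (1 - q)⁻¹ ^ (k - i) = (1 - q)⁻¹ ^ (k - s) * (1 - q)⁻¹ ^ (s - i) := by
      rw [← pow_add]; congr 1; omega
    calc f i (s - i)
        = ((k.choose i : ℝ) * ((k - i).choose (s - i) : ℝ)) * β i *
            (y ^ i * (-y) ^ (s - i)) * (1 - q)⁻¹ ^ (k - i) := by rw [hf]; ring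
      _ = ((k.choose s : ℝ) * (s.choose i : ℝ)) * β i * ((-1) ^ (s - i) * y ^ s) *
            ((1 - q)⁻¹ ^ (k - s) * (1 - q)⁻¹ ^ (s - i)) := by rw [hcc, hy, hcp]
      _ = ((k.choose s : ℝ) * y ^ s * (1 - q)⁻¹ ^ (k - s)) *
            ((s.choose i : ℝ) * (-1) ^ (s - i) * (1 - q)⁻¹ ^ (s - i) * β i) := by ring
  rw [sum_congr rfl e2, ← mul_sum, T_eq hq0 hq1 β h0 hrec s, g]
  have hck : (1 - q)⁻¹ ^ (k - s) * (1 - q)⁻¹ ^ s = (1 - q)⁻¹ ^ k := by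
    rw [← pow_add]; congr 1; omega
  have hys : (-y) ^ s = (-1) ^ s * y ^ s := by rw [neg_pow]
  rw [hys, ← hck]
  have hsq : ((-1 : ℝ)) ^ s * (-1) ^ s = 1 := by rw [← mul_pow]; norm_num
  field_simp

lemma lemQ (y : ℝ) {k : ℕ} (hk : 1 ≤ k) :
    ∑ s ∈ range (k + 1), (k.choose s : ℝ) * (-y) ^ s * ((s : ℝ) + 1)
      = (1 - y) ^ k - (k : ℝ) * y * (1 - y) ^ (k - 1) := by
  have hbin : ∀ (N : ℕ), ∑ s ∈ range (N + 1), (N.choose s : ℝ) * (-y) ^ s = (1 - y) ^ N := by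
    intro N
    rw [show (1 : ℝ) - y = -y + 1 from by ring, add_pow]
    exact sum_congr rfl fun m _ => by rw [one_pow, mul_one]; ring
  obtain ⟨k', rfl⟩ : ∃ k', k = k' + 1 := ⟨k - 1, by omega⟩
  have split : ∀ s ∈ range (k' + 1 + 1), (((k' + 1).choose s : ℝ)) * (-y) ^ s * ((s : ℝ) + 1)
      = ((k' + 1).choose s : ℝ) * (-y) ^ s * (s : ℝ) + ((k' + 1).choose s : ℝ) * (-y) ^ s := by
    intro s _; ring
  rw [sum_congr rfl split, sum_add_distrib, hbin (k' + 1)]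
  have h2 : ∑ s ∈ range (k' + 1 + 1), ((k' + 1).choose s : ℝ) * (-y) ^ s * (s : ℝ)
      = -((k' + 1 : ℕ) : ℝ) * y * (1 - y) ^ k' := by
    rw [sum_range_succ']
    simp only [Nat.cast_zero, mul_zero, add_zero]
    have step : ∀ s ∈ range (k' + 1),
        ((k' + 1).choose (s + 1) : ℝ) * (-y) ^ (s + 1) * ((s + 1 : ℕ) : ℝ)
          = (-((k' + 1 : ℕ) : ℝ) * y) * ((k'.choose s : ℝ) * (-y) ^ s) := by
      intro s _
      have h := Nat.add_one_mul_choose_eq k' s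
      have h' : ((k' + 1 : ℕ) : ℝ) * (k'.choose s : ℝ)
          = ((k' + 1).choose (s + 1) : ℝ) * ((s + 1 : ℕ) : ℝ) := by
        exact_mod_cast congrArg (Nat.cast : ℕ → ℝ) h
      push_cast at h' ⊢
      rw [pow_succ]
      linear_combination (y * (-y : ℝ) ^ s) * h'
    rw [sum_congr rfl step, ← mul_sum, hbin k']
  rw [h2, show k' + 1 - 1 = k' from rfl]
  push_cast
  ring

end CarlitzAux

open Finset CarlitzAux in
theorem carlitz_qBernoulli_sum (q : ℝ) (hq0 : 0 < q) (hq1 : q < 1)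
    (β : ℕ → ℝ) (h0 : β 0 = 1)
    (hrec : ∀ k : ℕ, 1 ≤ k →
      q * (∑ l ∈ Finset.range (k + 1), (k.choose l : ℝ) * q ^ l * β l) - β k =
        if k = 1 then 1 else 0)
    (n : ℕ) (hn : 0 < n) (k : ℕ) :
    q ^ n * (∑ i ∈ Finset.range (k + 1),
        (k.choose i : ℝ) * q ^ (i * n) * β i * ((1 - q ^ n) / (1 - q)) ^ (k - i)) - β k =
      (q - 1) * (∑ l ∈ Finset.range n, q ^ l * ((1 - q ^ l) / (1 - q)) ^ k) +
        (k : ℝ) * ∑ l ∈ Finset.range n, q ^ (2 * l) * ((1 - q ^ l) / (1 - q)) ^ (k - 1) := by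
  have h1q : (1 : ℝ) - q ≠ 0 := by linarith
  rcases Nat.eq_zero_or_pos k with rfl | hk
  · -- k = 0
    have hsum : ∑ i ∈ Finset.range (0 + 1),
        ((0 : ℕ).choose i : ℝ) * q ^ (i * n) * β i * ((1 - q ^ n) / (1 - q)) ^ (0 - i) = 1 := by
      simp [h0]
    rw [hsum, h0]
    simp only [Nat.cast_zero, zero_mul, add_zero, pow_zero, mul_one]
    rw [show (q : ℝ) ^ n - 1 = q ^ n - 1 from by ring, ← geom_sum_mul q n,
      Finset.mul_sum, Finset.sum_mul]
    exact Finset.sum_congr rfl fun l _ => by ring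
  · have hn' : 1 ≤ n := hn
    clear hn
    induction n, hn' using Nat.le_induction with
    | base =>
      rw [pow_one]
      have e : ∀ i ∈ range (k + 1), (k.choose i : ℝ) * q ^ (i * 1) * β i *
            ((1 - q) / (1 - q)) ^ (k - i) = (k.choose i : ℝ) * q ^ i * β i := by
        intro i _
        rw [div_self h1q, one_pow, mul_one, Nat.mul_one]
      rw [sum_congr rfl e, hrec k hk]
      simp only [Finset.range_one, Finset.sum_singleton, pow_zero, sub_self, zero_div,
        one_mul, Nat.mul_zero, mul_one]
      rcases eq_or_ne k 1 with h1 | h1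
      · rw [h1]; norm_num
      · rw [if_neg h1, zero_pow (by omega : k ≠ 0), zero_pow (by omega : k - 1 ≠ 0)]
        ring
    | succ n hn1 ih =>
      have hB : ∀ m : ℕ, ∑ i ∈ range (k + 1), (k.choose i : ℝ) * q ^ (i * m) * β i *
            ((1 - q ^ m) / (1 - q)) ^ (k - i)
          = (1 - q) * (1 - q)⁻¹ ^ k *
              ∑ s ∈ range (k + 1), (k.choose s : ℝ) * (-(q ^ m)) ^ s *
                (((s : ℝ) + 1) / (1 - q ^ (s + 1))) := by
        intro m
        have hP := lemP hq0 hq1 β h0 hrec k (q ^ m)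
        rw [← hP]
        exact sum_congr rfl fun i _ => by
          rw [show i * m = m * i from Nat.mul_comm i m, pow_mul]
      have hdiff : q ^ (n + 1) * (∑ s ∈ range (k + 1), (k.choose s : ℝ) * (-(q ^ (n + 1))) ^ s *
              (((s : ℝ) + 1) / (1 - q ^ (s + 1))))
          - q ^ n * (∑ s ∈ range (k + 1), (k.choose s : ℝ) * (-(q ^ n)) ^ s *
              (((s : ℝ) + 1) / (1 - q ^ (s + 1))))
          = -(q ^ n) * ((1 - q ^ n) ^ k - (k : ℝ) * q ^ n * (1 - q ^ n) ^ (k - 1)) := by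
        rw [mul_sum, mul_sum, ← sum_sub_distrib]
        have e : ∀ s ∈ range (k + 1),
            q ^ (n + 1) * ((k.choose s : ℝ) * (-(q ^ (n + 1))) ^ s *
                (((s : ℝ) + 1) / (1 - q ^ (s + 1))))
              - q ^ n * ((k.choose s : ℝ) * (-(q ^ n)) ^ s *
                (((s : ℝ) + 1) / (1 - q ^ (s + 1))))
            = -(q ^ n) * ((k.choose s : ℝ) * (-(q ^ n)) ^ s * ((s : ℝ) + 1)) := by
          intro s _
          have hne := one_sub_pow_ne hq0 hq1 s
          have hA : (-(q ^ (n + 1))) ^ s = (-(q ^ n)) ^ s * q ^ s := by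
            rw [pow_succ, show -(q ^ n * q) = (-(q ^ n)) * q from by ring, mul_pow]
          have hcancel : (q ^ (s + 1) - 1) * (((s : ℝ) + 1) / (1 - q ^ (s + 1)))
              = -((s : ℝ) + 1) := by
            field_simp
            ring
          rw [hA]
          linear_combination ((k.choose s : ℝ) * (-(q ^ n)) ^ s * q ^ n) * hcancel
        rw [sum_congr rfl e, ← mul_sum, lemQ (q ^ n) hk]
      have final : (1 - q) * (1 - q)⁻¹ ^ k *
            (-(q ^ n) * ((1 - q ^ n) ^ k - (k : ℝ) * q ^ n * (1 - q ^ n) ^ (k - 1)))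
          = (q - 1) * (q ^ n * ((1 - q ^ n) / (1 - q)) ^ k)
            + (k : ℝ) * (q ^ (2 * n) * ((1 - q ^ n) / (1 - q)) ^ (k - 1)) := by
        obtain ⟨k', rfl⟩ : ∃ k', k = k' + 1 := ⟨k - 1, by omega⟩
        rw [show k' + 1 - 1 = k' from rfl, show 2 * n = n + n from by ring, pow_add]
        rw [div_pow, div_pow]
        field_simp
        have hkk : (1 - q)⁻¹ ^ k' * (1 - q) ^ (k' * 2) = (1 - q) ^ k' := by
          rw [mul_two, pow_add, ← mul_assoc, ← mul_pow, inv_mul_cancel₀ h1q, one_pow, one_mul]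
        push_cast
        linear_combination (q * q ^ n * (1 - q ^ n) ^ k' - q * q ^ (n * 2) * (1 + (k' : ℝ)) * (1 - q ^ n) ^ k'
          - q * q ^ (n * 2) * (1 - q ^ n) ^ k' - q ^ n * (1 - q ^ n) ^ k'
          + q ^ (n * 2) * (1 + (k' : ℝ)) * (1 - q ^ n) ^ k' + q ^ (n * 2) * (1 - q ^ n) ^ k') * hkk
      rw [hB (n + 1), hB n] at *
      rw [Finset.sum_range_succ (fun l => q ^ l * ((1 - q ^ l) / (1 - q)) ^ k) n,
        Finset.sum_range_succ (fun l => q ^ (2 * l) * ((1 - q ^ l) / (1 - q)) ^ (k - 1)) n]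
      linear_combination ih + ((1 - q) * (1 - q)⁻¹ ^ k) * hdiff + final
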